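/- In a commutative idempotent involutive residuated lattice, for every x and every y with 0_x ⊑ y ⊑ 1_x (monoidal order), one has 0_y = 0_x (i.e., y ∧ ¬y = x ∧ ¬x). -/
import Mathlib


/-- A commutative idempotent involutive residuated lattice. -/
class CIdInRL (α : Type*) extends Lattice α, CommMonoid α, Zero α where
  arrow : α → α → α
  residuation : ∀ x y z : α, x * y ≤ z ↔ y ≤ arrow x z
  idem : ∀ x : α, x * x = x
  involutive : ∀ x : α, arrow (arrow x 0) 0 = x

namespace CIdInRL
variable {α : Type*} [CIdInRL α]
/-- linear negation ¬x := x → 0 -/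
def neg (x : α) : α := arrow x 0
/-- 0_x := x ∧ ¬x -/
def zx (x : α) : α := x ⊓ neg x
/-- 1_x := x ∨ ¬x -/
def ox (x : α) : α := x ⊔ neg x
/-- monoidal order x ⊑ y iff x·y = x -/
def mleq (x y : α) : Prop := x * y = x
end CIdInRL

namespace CIdInRL
variable {α : Type*} [CIdInRL α]

lemma mul_arrow_le (a b : α) : a * arrow a b ≤ b :=
  (residuation a (arrow a b) b).mpr le_rfl

lemma le_arrow {a b c : α} (h : a * b ≤ c) : b ≤ arrow a c :=
  (residuation a b c).mp h

lemma mul_le_of_le_arrow {a b c : α} (h : b ≤ arrow a c) : a * b ≤ c :=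
  (residuation a b c).mpr h

lemma mul_mono_right {a b c : α} (h : b ≤ c) : a * b ≤ a * c :=
  mul_le_of_le_arrow (h.trans (le_arrow le_rfl))

lemma mul_mono_left {a b c : α} (h : a ≤ b) : a * c ≤ b * c := by
  rw [mul_comm a c, mul_comm b c]; exact mul_mono_right h

lemma mul_neg_le_zero (a : α) : a * neg a ≤ 0 := mul_arrow_le a 0

lemma neg_neg' (a : α) : neg (neg a) = a := involutive a

lemma neg_antitone {a b : α} (h : a ≤ b) : neg b ≤ neg a :=
  le_arrow ((mul_mono_left h).trans (mul_neg_le_zero b))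

lemma neg_mul' (a b : α) : neg (a * b) = arrow a (neg b) := by
  apply le_antisymm
  · exact le_arrow (le_arrow (by
      rw [← mul_assoc, mul_comm b a]; exact mul_neg_le_zero (a * b)))
  · refine le_arrow ?_
    have h1 : (a * b) * arrow a (neg b) = b * (a * arrow a (neg b)) := by
      rw [← mul_assoc, mul_comm b a]
    rw [h1]
    exact (mul_mono_right (mul_arrow_le a (neg b))).trans (mul_neg_le_zero b)

lemma zx_eq (a : α) : zx a = a * neg a := by
  unfold zx
  apply le_antisymm
  · calc a ⊓ neg a = (a ⊓ neg a) * (a ⊓ neg a) := (idem _).symm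
      _ ≤ a * neg a :=
        (mul_mono_left inf_le_left).trans (mul_mono_right inf_le_right)
  · refine le_inf ?_ ?_
    · have h : neg a * (a * neg a) ≤ 0 := by
        rw [mul_comm a (neg a), ← mul_assoc, idem]
        exact (mul_mono_left le_rfl).trans (by rw [mul_comm]; exact mul_neg_le_zero a)
      have := le_arrow h
      rwa [show arrow (neg a) 0 = a from involutive a] at this
    · have h : a * (a * neg a) ≤ 0 := by
        rw [← mul_assoc, idem]; exact mul_neg_le_zero a
      exact le_arrow h

lemma neg_sup' (a b : α) : neg (a ⊔ b) = neg a ⊓ neg b := by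
  apply le_antisymm
  · exact le_inf (neg_antitone le_sup_left) (neg_antitone le_sup_right)
  · have ha : (neg a ⊓ neg b) * a ≤ 0 :=
      (mul_mono_left inf_le_left).trans (by rw [mul_comm]; exact mul_neg_le_zero a)
    have hb : (neg a ⊓ neg b) * b ≤ 0 :=
      (mul_mono_left inf_le_right).trans (by rw [mul_comm]; exact mul_neg_le_zero b)
    have hsup : a ⊔ b ≤ arrow (neg a ⊓ neg b) 0 := sup_le (le_arrow ha) (le_arrow hb)
    have : (a ⊔ b) * (neg a ⊓ neg b) ≤ 0 := by
      rw [mul_comm]; exact mul_le_of_le_arrow hsup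
    exact le_arrow this

lemma neg_ox (a : α) : neg (ox a) = zx a := by
  unfold ox zx
  rw [neg_sup', neg_neg', inf_comm]

end CIdInRL

open CIdInRL in
theorem stmt5 {α : Type*} [CIdInRL α] (x y : α)
    (hy : mleq (zx x) y ∧ mleq y (ox x)) :
    zx y = zx x := by
  obtain ⟨h1, h2⟩ := hy
  have h1 : zx x * y = zx x := h1
  have h2 : y * ox x = y := h2
  have hz0 : zx x ≤ 0 := by rw [zx_eq]; exact mul_neg_le_zero x
  -- neg y = arrow y (zx x)
  have hny : neg y = arrow y (zx x) := by
    conv_lhs => rw [← h2]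
    rw [neg_mul', neg_ox]
  have s1 : y * neg y ≤ zx x := by
    rw [hny]; exact mul_arrow_le y (zx x)
  -- second direction
  have key : arrow y y * zx x ≤ 0 := by
    calc arrow y y * zx x = arrow y y * (zx x * y) := by rw [h1]
      _ = (y * arrow y y) * zx x := by
          rw [mul_comm (zx x) y, ← mul_assoc, mul_comm (arrow y y) y]
      _ ≤ y * zx x := mul_mono_left (mul_arrow_le y y)
      _ = zx x := by rw [mul_comm]; exact h1
      _ ≤ 0 := hz0
  have harr : arrow y y ≤ ox x := by
    have h := le_arrow (by rw [mul_comm]; exact key : zx x * arrow y y ≤ 0)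
    have hzo : arrow (zx x) 0 = ox x := by
      have := congrArg neg (neg_ox x)
      rw [neg_neg'] at this
      exact this.symm
    rwa [hzo] at h
  have s2 : zx x ≤ y * neg y := by
    have h3 : neg (y * neg y) = arrow y y := by rw [neg_mul', neg_neg']
    have h4 := neg_antitone harr
    rwa [neg_ox, ← h3, neg_neg'] at h4
  rw [zx_eq y]
  exact le_antisymm s1 s2
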